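/- Let E be an S-dominating effect algebra and S ⊆ S(E). If the join of S computed in E exists, then it belongs to S(E) and equals the join of S computed in S(E). Hence S(E) is bifull in E. -/
import Mathlib


universe u v

/-- An effect algebra: a partial algebra `(E; ⊕, 0, 1)` with `0 ≠ 1`, where `⊕` is
partially defined (domain `D`), commutative and associative where defined, every
element has a unique orthosupplement (`compl`, skolemizing axiom (Eiii)), and
`1 ⊕ x` defined implies `x = 0`. -/
structure EffectAlgebra (E : Type u) where
  D : E → E → Prop
  oplus : E → E → E
  zero : E
  one : E
  zero_ne_one : zero ≠ one
  D_comm : ∀ x y, D x y → D y x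
  oplus_comm : ∀ x y, D x y → oplus x y = oplus y x
  assoc : ∀ x y z, D x y → D (oplus x y) z →
      D y z ∧ D x (oplus y z) ∧ oplus (oplus x y) z = oplus x (oplus y z)
  assoc' : ∀ x y z, D y z → D x (oplus y z) →
      D x y ∧ D (oplus x y) z ∧ oplus (oplus x y) z = oplus x (oplus y z)
  compl : E → E
  D_compl : ∀ x, D x (compl x)
  oplus_compl : ∀ x, oplus x (compl x) = one
  compl_unique : ∀ x y, D x y → oplus x y = one → y = compl x
  one_max : ∀ x, D one x → x = zero

namespace EffectAlgebra

variable {E : Type u} (A : EffectAlgebra E)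

/-- The induced order: `x ≤ y` iff `x ⊕ z = y` for some `z`. -/
def le (x y : E) : Prop := ∃ z, A.D x z ∧ A.oplus x z = y

def IsLB (S : Set E) (m : E) : Prop := ∀ x ∈ S, A.le m x
def IsUB (S : Set E) (m : E) : Prop := ∀ x ∈ S, A.le x m

/-- `m` is the infimum of `S` computed within the subposet `P`. -/
def IsInfIn (P : Set E) (S : Set E) (m : E) : Prop :=
  m ∈ P ∧ A.IsLB S m ∧ ∀ z ∈ P, A.IsLB S z → A.le z m

/-- `m` is the supremum of `S` computed within the subposet `P`. -/
def IsSupIn (P : Set E) (S : Set E) (m : E) : Prop :=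
  m ∈ P ∧ A.IsUB S m ∧ ∀ z ∈ P, A.IsUB S z → A.le m z

/-- `w` is sharp iff the meet `w ∧ w'` exists in `E` and equals `0`. -/
def Sharp (w : E) : Prop := A.IsInfIn Set.univ {w, A.compl w} A.zero

/-- The set `S(E)` of sharp elements. -/
def sharpSet : Set E := {w | A.Sharp w}

def HasMeet (x y : E) : Prop := ∃ m, A.IsInfIn Set.univ {x, y} m
def HasJoin (x y : E) : Prop := ∃ j, A.IsSupIn Set.univ {x, y} j

/-- Every `x` has a least sharp element above it, which is the infimum of the sharp
elements above `x` both in `E` and in `S(E)`. -/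
def SharplyDominating : Prop :=
  ∀ x : E, ∃ w, A.Sharp w ∧ A.le x w ∧
    A.IsInfIn Set.univ {v | A.Sharp v ∧ A.le x v} w ∧
    A.IsInfIn A.sharpSet {v | A.Sharp v ∧ A.le x v} w

/-- Sharply dominating, and `x ∧ w` exists for every `x ∈ E`, `w ∈ S(E)`. -/
def SDominating : Prop :=
  A.SharplyDominating ∧ ∀ x w : E, A.Sharp w → A.HasMeet x w

end EffectAlgebra

/-- `SumDef A l s` : the orthosum of the finite list `l` is defined and equals `s`. -/
inductive EffectAlgebra.SumDef {E : Type u} (A : EffectAlgebra E) : List E → E → Prop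
  | nil : EffectAlgebra.SumDef A [] A.zero
  | cons {x : E} {l : List E} {s : E} : EffectAlgebra.SumDef A l s → A.D x s →
      EffectAlgebra.SumDef A (x :: l) (A.oplus x s)

namespace EffectAlgebra

variable {E : Type u} (A : EffectAlgebra E)

/-- A family is orthogonal iff every finite subfamily has a defined orthosum. -/
def Orthogonal {ι : Type v} (x : ι → E) : Prop :=
  ∀ l : List ι, l.Nodup → ∃ s, A.SumDef (l.map x) s

/-- The set of finite partial orthosums of a family. -/
def finiteSums {ι : Type v} (x : ι → E) : Set E :=
  {s | ∃ l : List ι, l.Nodup ∧ A.SumDef (l.map x) s}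

/-- `v = ⊕ x` : the family is orthogonal and `v` is the supremum in `E` of all
finite partial orthosums. -/
def HasOrthoSum {ι : Type v} (x : ι → E) (v : E) : Prop :=
  A.Orthogonal x ∧ A.IsSupIn Set.univ (A.finiteSums x) v

/-- Every family dominated elementwise by an orthogonal family of sharp
elements has an orthosum. -/
def SharplyOrthocomplete : Prop :=
  ∀ (ι : Type u) (x w : ι → E), (∀ k, A.Sharp (w k)) → A.Orthogonal w →
    (∀ k, A.le (x k) (w k)) → ∃ v, A.HasOrthoSum x v

/-- `c` is central: for every `y` the meets `y ∧ c`, `y ∧ c'` exist and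
`y = (y ∧ c) ∨ (y ∧ c')`. -/
def Central (c : E) : Prop :=
  ∀ y : E, ∃ m₁ m₂, A.IsInfIn Set.univ {y, c} m₁ ∧
    A.IsInfIn Set.univ {y, A.compl c} m₂ ∧ A.IsSupIn Set.univ {m₁, m₂} y

/-- The center `C(E)`. -/
def centerSet : Set E := {c | A.Central c}

def CentrallyDominating : Prop :=
  ∀ x : E, ∃ c, A.Central c ∧ A.le x c ∧
    A.IsInfIn Set.univ {d | A.Central d ∧ A.le x d} c ∧
    A.IsInfIn A.centerSet {d | A.Central d ∧ A.le x d} c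

def CentrallyOrthocomplete : Prop :=
  ∀ (ι : Type u) (x c : ι → E), (∀ k, A.Central (c k)) → A.Orthogonal c →
    (∀ k, A.le (x k) (c k)) → ∃ v, A.HasOrthoSum x v

/-- `P` is bifull in `E`: for `S ⊆ P`, the join of `S` in `P` exists iff the join
of `S` in `E` exists, and then they coincide. -/
def Bifull (P : Set E) : Prop :=
  ∀ S ⊆ P, (∀ s, A.IsSupIn P S s → A.IsSupIn Set.univ S s) ∧
    (∀ s, A.IsSupIn Set.univ S s → A.IsSupIn P S s)

/-- The subposet `P` is a complete lattice: every subset of `P` has a supremum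
(and an infimum) computed within `P`. -/
def CompleteIn (P : Set E) : Prop :=
  ∀ S ⊆ P, (∃ s, A.IsSupIn P S s) ∧ (∃ m, A.IsInfIn P S m)

/-- `E` is a complete lattice. -/
def Complete : Prop :=
  ∀ S : Set E, (∃ s, A.IsSupIn Set.univ S s) ∧ (∃ m, A.IsInfIn Set.univ S m)

/-- The induced order of `E` is a lattice. -/
def LatticeOrdered : Prop := ∀ x y : E, A.HasMeet x y ∧ A.HasJoin x y

/-- `x ↔ y` : `x ∨ y = x ⊕ (y ⊖ (x ∧ y))`. -/
def Compatible (x y : E) : Prop :=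
  ∃ m j z, A.IsInfIn Set.univ {x, y} m ∧ A.IsSupIn Set.univ {x, y} j ∧
    A.D m z ∧ A.oplus m z = y ∧ A.D x z ∧ A.oplus x z = j

/-- An MV-effect algebra: a lattice effect algebra all of whose pairs of elements
are compatible. -/
def MV : Prop := A.LatticeOrdered ∧ ∀ x y : E, A.Compatible x y

/-- `nx = x ⊕ ⋯ ⊕ x` (`n` times) is defined. -/
def nTimesDef (n : ℕ) (x : E) : Prop := ∃ s, A.SumDef (List.replicate n x) s

/-- `ord x < ∞` for every nonzero `x`. -/
def IsArchimedean : Prop := ∀ x : E, x ≠ A.zero → ∃ n : ℕ, ¬ A.nTimesDef n x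

def Atom (a : E) : Prop := a ≠ A.zero ∧ ∀ b, A.le b a → b = A.zero ∨ b = a

def Atomic : Prop := ∀ x : E, x ≠ A.zero → ∃ a, A.Atom a ∧ A.le a x

/-- The subposet `P` (closed under `'`) is an orthomodular lattice. -/
def OrthomodularIn (P : Set E) : Prop :=
  (∀ x ∈ P, ∀ y ∈ P, (∃ m, A.IsInfIn P {x, y} m) ∧ (∃ j, A.IsSupIn P {x, y} j)) ∧
  A.zero ∈ P ∧ A.one ∈ P ∧ (∀ x ∈ P, A.compl x ∈ P) ∧
  (∀ x ∈ P, A.IsInfIn P {x, A.compl x} A.zero ∧ A.IsSupIn P {x, A.compl x} A.one) ∧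
  (∀ x ∈ P, ∀ y ∈ P, A.le x y →
    ∃ m, A.IsInfIn P {y, A.compl x} m ∧ A.IsSupIn P {x, m} y)

def DistributiveIn (P : Set E) : Prop :=
  ∀ x ∈ P, ∀ y ∈ P, ∀ z ∈ P, ∀ jyz mxy mxz m : E,
    A.IsSupIn P {y, z} jyz → A.IsInfIn P {x, y} mxy → A.IsInfIn P {x, z} mxz →
    A.IsInfIn P {x, jyz} m → A.IsSupIn P {mxy, mxz} m

/-- The subposet `P` is a Boolean algebra (complemented distributive lattice with
bounds, complement given by `'`). -/
def BooleanIn (P : Set E) : Prop :=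
  (∀ x ∈ P, ∀ y ∈ P, (∃ m, A.IsInfIn P {x, y} m) ∧ (∃ j, A.IsSupIn P {x, y} j)) ∧
  A.zero ∈ P ∧ A.one ∈ P ∧ (∀ x ∈ P, A.compl x ∈ P) ∧
  (∀ x ∈ P, A.IsInfIn P {x, A.compl x} A.zero ∧ A.IsSupIn P {x, A.compl x} A.one) ∧
  A.DistributiveIn P

/-- A block: a maximal set of pairwise compatible elements. -/
def Block (M : Set E) : Prop :=
  (∀ x ∈ M, ∀ y ∈ M, A.Compatible x y) ∧
  ∀ N : Set E, M ⊆ N → (∀ x ∈ N, ∀ y ∈ N, A.Compatible x y) → N = M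

def AtomIn (M : Set E) (a : E) : Prop :=
  a ∈ M ∧ a ≠ A.zero ∧ ∀ b ∈ M, A.le b a → b = A.zero ∨ b = a

def AtomicIn (M : Set E) : Prop :=
  ∀ x ∈ M, x ≠ A.zero → ∃ a, A.AtomIn M a ∧ A.le a x

end EffectAlgebra

namespace EffectAlgebra

variable {E : Type u} (A : EffectAlgebra E)

lemma compl_one' : A.compl A.one = A.zero := A.one_max _ (A.D_compl A.one)

lemma D_one_zero : A.D A.one A.zero := A.compl_one' ▸ A.D_compl A.one

lemma oplus_one_zero : A.oplus A.one A.zero = A.one :=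
  A.compl_one' ▸ A.oplus_compl A.one

lemma compl_compl' (x : E) : A.compl (A.compl x) = x := by
  have h1 : A.D (A.compl x) x := A.D_comm _ _ (A.D_compl x)
  have h2 : A.oplus (A.compl x) x = A.one := by
    rw [← A.oplus_comm x _ (A.D_compl x)]; exact A.oplus_compl x
  exact (A.compl_unique _ x h1 h2).symm

lemma D_zero (x : E) : A.D x A.zero ∧ A.oplus x A.zero = x := by
  have hc : A.D (A.compl x) x := A.D_comm _ _ (A.D_compl x)
  have h1 : A.oplus (A.compl x) x = A.one := by
    rw [← A.oplus_comm x _ (A.D_compl x)]; exact A.oplus_compl x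
  have h2 : A.D (A.oplus (A.compl x) x) A.zero := h1 ▸ A.D_one_zero
  obtain ⟨hy, hx0, heq⟩ := A.assoc (A.compl x) x A.zero hc h2
  have h3 : A.oplus (A.compl x) (A.oplus x A.zero) = A.one := by
    rw [← heq, h1, A.oplus_one_zero]
  have := A.compl_unique _ _ hx0 h3
  rw [A.compl_compl'] at this
  exact ⟨hy, this⟩

lemma oplus_right_cancel {b c e : E} (hbe : A.D b e) (hce : A.D c e)
    (h : A.oplus b e = A.oplus c e) : b = c := by
  set f := A.oplus b e with hf
  have hDf : A.D f (A.compl f) := A.D_compl f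
  have hDf' : A.D (A.oplus c e) (A.compl f) := h ▸ hDf
  obtain ⟨h1, h2, h3⟩ := A.assoc b e (A.compl f) hbe hDf
  obtain ⟨h1', h2', h3'⟩ := A.assoc c e (A.compl f) hce hDf'
  have hb : A.oplus b (A.oplus e (A.compl f)) = A.one := by
    rw [← h3]; exact A.oplus_compl f
  have hc : A.oplus c (A.oplus e (A.compl f)) = A.one := by
    rw [← h3', ← h]; exact A.oplus_compl f
  have eb := A.compl_unique _ _ h2 hb
  have ec := A.compl_unique _ _ h2' hc
  calc b = A.compl (A.compl b) := (A.compl_compl' b).symm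
    _ = A.compl (A.compl c) := by rw [← eb, ← ec]
    _ = c := A.compl_compl' c

lemma oplus_left_cancel {a b c : E} (hab : A.D a b) (hac : A.D a c)
    (h : A.oplus a b = A.oplus a c) : b = c := by
  refine A.oplus_right_cancel (A.D_comm _ _ hab) (A.D_comm _ _ hac) ?_
  rw [← A.oplus_comm a b hab, ← A.oplus_comm a c hac]; exact h

lemma eq_zero_of_oplus_eq_zero {u v : E} (huv : A.D u v)
    (h : A.oplus u v = A.zero) : u = A.zero ∧ v = A.zero := by
  have hD01 : A.D A.zero A.one := A.D_comm _ _ A.D_one_zero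
  have hD : A.D (A.oplus u v) A.one := h ▸ hD01
  obtain ⟨h1, _, _⟩ := A.assoc u v A.one huv hD
  have hv : v = A.zero := A.one_max v (A.D_comm _ _ h1)
  subst hv
  rw [(A.D_zero u).2] at h
  exact ⟨h, rfl⟩

lemma le_refl' (x : E) : A.le x x := ⟨A.zero, (A.D_zero x).1, (A.D_zero x).2⟩

lemma le_trans' {a b c : E} (hab : A.le a b) (hbc : A.le b c) : A.le a c := by
  obtain ⟨u, hu, hequ⟩ := hab
  obtain ⟨v, hv, heqv⟩ := hbc
  have hDv : A.D (A.oplus a u) v := hequ ▸ hv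
  obtain ⟨h1, h2, h3⟩ := A.assoc a u v hu hDv
  exact ⟨A.oplus u v, h2, by rw [← h3, hequ, heqv]⟩

lemma le_antisymm' {a b : E} (hab : A.le a b) (hba : A.le b a) : a = b := by
  obtain ⟨u, hu, hequ⟩ := hab
  obtain ⟨v, hv, heqv⟩ := hba
  have hDv : A.D (A.oplus a u) v := hequ ▸ hv
  obtain ⟨h1, h2, h3⟩ := A.assoc a u v hu hDv
  have h4 : A.oplus a (A.oplus u v) = A.oplus a A.zero := by
    rw [← h3, hequ, heqv, (A.D_zero a).2]
  have h5 := A.oplus_left_cancel h2 (A.D_zero a).1 h4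
  obtain ⟨hu0, -⟩ := A.eq_zero_of_oplus_eq_zero h1 h5
  rw [← hequ, hu0, (A.D_zero a).2]

lemma compl_anti {a b : E} (hab : A.le a b) : A.le (A.compl b) (A.compl a) := by
  obtain ⟨u, hu, hequ⟩ := hab
  have hDb : A.D (A.oplus a u) (A.compl b) := hequ ▸ A.D_compl b
  obtain ⟨h1, h2, h3⟩ := A.assoc a u (A.compl b) hu hDb
  have h4 : A.oplus a (A.oplus u (A.compl b)) = A.one := by
    rw [← h3, hequ]; exact A.oplus_compl b
  have h5 := A.compl_unique _ _ h2 h4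
  exact ⟨u, A.D_comm _ _ h1, by rw [← A.oplus_comm _ _ h1, ← h5]⟩

lemma sharp_compl {w : E} (hw : A.Sharp w) : A.Sharp (A.compl w) := by
  unfold Sharp at *
  rwa [A.compl_compl', Set.pair_comm]

/-- Core lemma: if `w` is sharp, `x ≤ w`, every element of a set `T` of sharp
elements is `≤ x`, and `w` is below every sharp upper bound of `T`, then `x = w`. -/
lemma core_eq (hSD : A.SharplyDominating) {w x : E} {T : Set E}
    (_hw : A.Sharp w) (hxw : A.le x w) (hT : T ⊆ A.sharpSet)
    (hTx : ∀ t ∈ T, A.le t x)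
    (hmin : ∀ v, A.Sharp v → A.IsUB T v → A.le w v) : x = w := by
  obtain ⟨q, hq_sharp, hxq, hinf, -⟩ := hSD (A.compl x)
  -- `c = q'` is the greatest sharp element below `x`.
  set c := A.compl q with hc
  have hc_sharp : A.Sharp c := A.sharp_compl hq_sharp
  have hcx : A.le c x := by
    have := A.compl_anti hxq
    rwa [A.compl_compl'] at this
  have hcub : A.IsUB T c := by
    intro t ht
    have ht_sharp : A.Sharp t := hT ht
    have h1 : A.le (A.compl x) (A.compl t) := A.compl_anti (hTx t ht)
    have h2 : A.le q (A.compl t) :=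
      hinf.2.1 (A.compl t) ⟨A.sharp_compl ht_sharp, h1⟩
    have h3 := A.compl_anti h2
    rwa [A.compl_compl'] at h3
  have hwc : A.le w c := hmin c hc_sharp hcub
  exact A.le_antisymm' hxw (A.le_trans' hwc hcx)

/-- A supremum in `E` of a set of sharp elements is sharp, and is also the
supremum in `S(E)`. -/
lemma sup_sharp (hSD : A.SDominating) {S : Set E} (hS : S ⊆ A.sharpSet) {z : E}
    (hz : A.IsSupIn Set.univ S z) :
    z ∈ A.sharpSet ∧ A.IsSupIn A.sharpSet S z := by
  obtain ⟨w, hw_sharp, hzw, hinf, -⟩ := hSD.1 z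
  have hzS : z = w := by
    refine A.core_eq hSD.1 hw_sharp hzw hS hz.2.1 ?_
    intro v hv hub
    exact hinf.2.1 v ⟨hv, hz.2.2 v (Set.mem_univ v) hub⟩
  have hzsharp : A.Sharp z := by rw [hzS]; exact hw_sharp
  exact ⟨hzsharp, hzsharp, hz.2.1, fun v _ hub => hz.2.2 v (Set.mem_univ v) hub⟩

end EffectAlgebra

/-- In an S-dominating effect algebra, a join of sharp elements computed in `E`
is sharp and is their join in `S(E)`; hence `S(E)` is bifull in `E`. -/
theorem stmt6 {E : Type u} (A : EffectAlgebra E) (hSD : A.SDominating)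
    (S : Set E) (hS : S ⊆ A.sharpSet) (z : E)
    (hz : A.IsSupIn Set.univ S z) :
    z ∈ A.sharpSet ∧ A.IsSupIn A.sharpSet S z ∧ A.Bifull A.sharpSet := by
  obtain ⟨h1, h2⟩ := A.sup_sharp hSD hS hz
  refine ⟨h1, h2, ?_⟩
  intro T hT
  constructor
  · intro s hs
    have hs_sharp : A.Sharp s := hs.1
    refine ⟨Set.mem_univ s, hs.2.1, ?_⟩
    intro u _ huub
    obtain ⟨v, hv⟩ := hSD.2 u s hs_sharp
    have hvs : A.le v s := hv.2.1 s (by simp)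
    have hvu : A.le v u := hv.2.1 u (by simp)
    have hTv : ∀ t ∈ T, A.le t v := by
      intro t ht
      refine hv.2.2 t (Set.mem_univ t) ?_
      intro y hy
      rcases hy with rfl | hy
      · exact huub t ht
      · simp only [Set.mem_singleton_iff] at hy
        subst hy
        exact hs.2.1 t ht
    have hvseq : v = s :=
      A.core_eq hSD.1 hs_sharp hvs hT hTv (fun v' hv' hub => hs.2.2 v' hv' hub)
    rw [← hvseq]
    exact hvu
  · intro s hs
    exact (A.sup_sharp hSD hT hs).2
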